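/- Let f : ℝ → ℝ be the inverse of h. Then the map φ : ℝ → ℝ given by φ(v) = f(v)·√(1 + f(v)²) (i.e. φ = f/f') is differentiable at every v ∈ ℝ with derivative φ'(v) = 1 + f(v)²/(1 + f(v)²), and this derivative satisfies 1 ≤ φ'(v) < 2 for all v. -/

import Mathlib

noncomputable def h (u : ℝ) : ℝ :=
  (1 / 2) * u * Real.sqrt (1 + u ^ 2) + (1 / 2) * Real.log (u + Real.sqrt (1 + u ^ 2))

lemma sqrt_pos' (u : ℝ) : 0 < Real.sqrt (1 + u ^ 2) :=
  Real.sqrt_pos.mpr (by positivity)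

lemma sq_sqrt' (u : ℝ) : Real.sqrt (1 + u ^ 2) * Real.sqrt (1 + u ^ 2) = 1 + u ^ 2 :=
  Real.mul_self_sqrt (by positivity)

lemma abs_lt_sqrt (u : ℝ) : |u| < Real.sqrt (1 + u ^ 2) := by
  have := Real.sqrt_lt_sqrt (by positivity : (0:ℝ) ≤ u ^ 2) (by linarith : u ^ 2 < 1 + u ^ 2)
  simpa [Real.sqrt_sq_eq_abs] using this

lemma hasDerivAt_sqrt1 (u : ℝ) :
    HasDerivAt (fun u : ℝ => Real.sqrt (1 + u ^ 2)) (u / Real.sqrt (1 + u ^ 2)) u := by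
  have h1 : HasDerivAt (fun u : ℝ => 1 + u ^ 2) (2 * u) u := by
    simpa using ((hasDerivAt_pow 2 u).const_add 1)
  have := (Real.hasDerivAt_sqrt (by positivity : (1:ℝ) + u ^ 2 ≠ 0)).comp u h1
  refine this.congr_deriv ?_
  have hs := (sqrt_pos' u).ne'
  field_simp

lemma h_hasDerivAt (u : ℝ) : HasDerivAt h (Real.sqrt (1 + u ^ 2)) u := by
  set s := Real.sqrt (1 + u ^ 2) with hs
  have hspos := sqrt_pos' u
  have hss := sq_sqrt' u
  have hup : 0 < u + s := by
    have := abs_lt_sqrt u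
    cases abs_lt.mp this with
    | intro h1 h2 => linarith
  have t1 : HasDerivAt (fun u : ℝ => (1/2) * u * Real.sqrt (1 + u ^ 2))
      ((1/2) * (1 * s + u * (u / s))) u := by
    have := ((hasDerivAt_id u).mul (hasDerivAt_sqrt1 u)).const_mul (1/2 : ℝ)
    simpa [mul_assoc] using this
  have t2 : HasDerivAt (fun u : ℝ => (1/2) * Real.log (u + Real.sqrt (1 + u ^ 2)))
      ((1/2) * ((1 + u / s) / (u + s))) u := by
    have hinner : HasDerivAt (fun u : ℝ => u + Real.sqrt (1 + u ^ 2)) (1 + u / s) u :=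
      (hasDerivAt_id u).add (hasDerivAt_sqrt1 u)
    exact (hinner.log hup.ne').const_mul _
  have := t1.add t2
  have hsne : s ≠ 0 := hspos.ne'
  have e2 : (1 + u / s) / (u + s) = 1 / s := by
    field_simp
    ring_nf
  rw [e2] at this
  refine this.congr_deriv ?_
  field_simp
  nlinarith [hss]

lemma h_strictMono : StrictMono h := by
  have : ∀ x : ℝ, HasDerivAt h (Real.sqrt (1 + x ^ 2)) x := h_hasDerivAt
  apply strictMono_of_deriv_pos
  intro x
  rw [(this x).deriv]
  exact sqrt_pos' x

theorem stmt_13 (f : ℝ → ℝ) (hf₁ : Function.LeftInverse f h)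
    (hf₂ : Function.RightInverse f h) :
    ∀ v : ℝ,
      HasDerivAt (fun v : ℝ => f v * Real.sqrt (1 + f v ^ 2))
        (1 + f v ^ 2 / (1 + f v ^ 2)) v ∧
      1 ≤ 1 + f v ^ 2 / (1 + f v ^ 2) ∧ 1 + f v ^ 2 / (1 + f v ^ 2) < 2 := by
  have hmono : Monotone f := by
    intro a b hab
    by_contra hlt
    push_neg at hlt
    have := h_strictMono hlt
    rw [hf₂ a, hf₂ b] at this
    exact absurd hab (not_le.mpr this)
  have hsurj : Function.Surjective f := hf₁.surjective
  have hcont : Continuous f := hmono.continuous_of_surjective hsurj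
  intro v
  set c := f v with hc
  set s := Real.sqrt (1 + c ^ 2) with hs
  have hspos := sqrt_pos' c
  have hss := sq_sqrt' c
  have hfderiv : HasDerivAt f s⁻¹ v :=
    HasDerivAt.of_local_left_inverse hcont.continuousAt (h_hasDerivAt c) hspos.ne'
      (Filter.Eventually.of_forall hf₂)
  have hsq : HasDerivAt (fun v : ℝ => Real.sqrt (1 + f v ^ 2))
      ((2 * c * s⁻¹) / (2 * s)) v := by
    have hinner : HasDerivAt (fun v : ℝ => 1 + f v ^ 2) (2 * c * s⁻¹) v := by
      have := ((hfderiv.pow 2).const_add 1)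
      simpa [mul_comm, mul_assoc] using this
    have := (Real.hasDerivAt_sqrt (by positivity : (1:ℝ) + c ^ 2 ≠ 0)).comp v hinner
    refine this.congr_deriv ?_; rw [← hs]; ring
  have hprod := hfderiv.mul hsq
  refine ⟨?_, ?_, ?_⟩
  · refine hprod.congr_deriv ?_
    have hsne : s ≠ 0 := hspos.ne'
    field_simp
    ring
    nlinarith [hss]
  · have : (0:ℝ) ≤ c ^ 2 / (1 + c ^ 2) := by positivity
    linarith
  · have : c ^ 2 / (1 + c ^ 2) < 1 := by
      rw [div_lt_one (by positivity)]; linarith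
    linarith
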